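/- arXiv:2405.03353 — 8 statements merged into one kernel-verified Lean document; each statement's English description precedes it below -/
import Mathlib

section
/- Let M be an m×m real upper triangular matrix with diagonal entries in [0,1), such that every row of M except the last sums to 1, and M(m-1, j) = 0 for all j. Let A = I − M. Then A^{-1}(i, m−1) = 1 for all i, i.e., the last column of A^{-1} consists entirely of ones. -/
theorem last_column_of_inverse (m : ℕ) (hm : 0 < m)
    (M : Matrix (Fin m) (Fin m) ℝ)
    (hut : ∀ i j : Fin m, j < i → M i j = 0)
    (hdiag : ∀ i : Fin m, 0 ≤ M i i ∧ M i i < 1)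
    (hrow : ∀ i : Fin m, (i : ℕ) ≠ m - 1 → ∑ j, M i j = 1)
    (hlast : ∀ j : Fin m, M ⟨m - 1, by omega⟩ j = 0) :
    ∀ i : Fin m, (1 - M)⁻¹ i ⟨m - 1, by omega⟩ = 1 := by
  set A : Matrix (Fin m) (Fin m) ℝ := 1 - M with hA
  set last : Fin m := ⟨m - 1, by omega⟩ with hlastdef
  -- A is upper triangular
  have hAtri : A.BlockTriangular id := by
    intro i j hij
    simp only [hA, Matrix.sub_apply, Matrix.one_apply]
    rw [hut i j hij, if_neg (by rintro rfl; exact lt_irrefl _ hij)]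
    ring
  have hdet : A.det ≠ 0 := by
    rw [Matrix.det_of_upperTriangular hAtri]
    apply Finset.prod_ne_zero_iff.mpr
    intro i _
    simp only [hA, Matrix.sub_apply, Matrix.one_apply_eq]
    have := (hdiag i).2
    intro h
    linarith
  -- A applied to the all-ones vector is the last standard basis vector
  have hmul : A.mulVec (fun _ => 1) = Pi.single last 1 := by
    funext i
    simp only [Matrix.mulVec, dotProduct, mul_one]
    by_cases hi : i = last
    · subst hi
      rw [Pi.single_eq_same]
      have : ∑ j, A last j = ∑ j, (1 : Matrix (Fin m) (Fin m) ℝ) last j := by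
        apply Finset.sum_congr rfl
        intro j _
        simp [hA, Matrix.sub_apply, hlast j]
      rw [this]
      simp [Matrix.one_apply, Finset.sum_ite_eq]
    · rw [Pi.single_eq_of_ne hi]
      have hsum : ∑ j, A i j = (∑ j, (1 : Matrix (Fin m) (Fin m) ℝ) i j) - ∑ j, M i j := by
        rw [← Finset.sum_sub_distrib]
        rfl
      rw [hsum]
      have h1 : (∑ j, (1 : Matrix (Fin m) (Fin m) ℝ) i j) = 1 := by
        simp [Matrix.one_apply, Finset.sum_ite_eq]
      have h2 : ∑ j, M i j = 1 := hrow i (by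
        intro h
        apply hi
        apply Fin.ext
        exact h)
      rw [h1, h2]; ring
  have hinv : A⁻¹ * A = 1 := Matrix.nonsing_inv_mul A (isUnit_iff_ne_zero.mpr hdet)
  have hvec : A⁻¹.mulVec (Pi.single last 1) = fun _ => 1 := by
    rw [← hmul, Matrix.mulVec_mulVec, hinv, Matrix.one_mulVec]
  intro i
  have := congrFun hvec i
  simp only [Matrix.mulVec, dotProduct] at this
  rw [Fintype.sum_eq_single last (fun j hj => by
    rw [Pi.single_eq_of_ne hj, mul_zero])] at this
  rw [Pi.single_eq_same, mul_one] at this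
  exact this
end

section
/- Let t > 0 and n ≥ 1. Define p(i) = (1/2)^{i+1} for 0 ≤ i ≤ n−1 and p(n) = (1/2)^n. Define the (n+1)×(n+1) matrix M with M(i,i) = 1 − t·(1/(1+t))^{i+1} for 0 ≤ i ≤ n−1, M(i,j) = t·(1/(1+t))^{i+1}·(1/2)^{j−i} for 0 ≤ i < j ≤ n−1, M(i,n) = t·(1/(1+t))^{i+1}·(1/2)^{n−i−1} for 0 ≤ i ≤ n−1, M(n,n) = 0, and M(i,j) = 0 for j < i. Then the expression ∑_{i=0}^{n−1} p(i)·(1/A(i,i) + ∑_{j=i+1}^{n−1} δ_j), with A = I − M and δ_j = −A(j−1,j)/(A(j−1,j−1)·A(j,j)), equals ((1+t)/(2t²))·((1+t)^n − 1). -/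
/-- The value `δ_j = −A(j−1,j)/(A(j−1,j−1)·A(j,j))` where `A = I − M`. -/
noncomputable def delta {m : ℕ} (M : Matrix (Fin m) (Fin m) ℝ) (j : Fin m) : ℝ :=
  -(1 - M) ⟨(j : ℕ) - 1, lt_of_le_of_lt (Nat.sub_le _ _) j.isLt⟩ j /
    ((1 - M) ⟨(j : ℕ) - 1, lt_of_le_of_lt (Nat.sub_le _ _) j.isLt⟩
        ⟨(j : ℕ) - 1, lt_of_le_of_lt (Nat.sub_le _ _) j.isLt⟩ *
      (1 - M) j j)

/-- The Markov matrix of BACO on LeadingOnes with `n` bits and pheromone ratio `t`. -/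
noncomputable def MLO (n : ℕ) (t : ℝ) : Matrix (Fin (n + 1)) (Fin (n + 1)) ℝ :=
  Matrix.of fun i j =>
    if (j : ℕ) < (i : ℕ) then 0
    else if (i : ℕ) = (j : ℕ) then
      (if (i : ℕ) = n then 0 else 1 - t * (1 / (1 + t)) ^ ((i : ℕ) + 1))
    else if (j : ℕ) = n then t * (1 / (1 + t)) ^ ((i : ℕ) + 1) * (1 / 2) ^ (n - (i : ℕ) - 1)
    else t * (1 / (1 + t)) ^ ((i : ℕ) + 1) * (1 / 2) ^ ((j : ℕ) - (i : ℕ))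

/-- Distribution of the initial Markov state for LeadingOnes. -/
noncomputable def pLO (n : ℕ) (i : Fin (n + 1)) : ℝ :=
  if (i : ℕ) = n then (1 / 2) ^ n else (1 / 2) ^ ((i : ℕ) + 1)

-- auxiliary lemmas
lemma diag_eq (n : ℕ) (t : ℝ) (i : Fin (n+1)) (hi : (i:ℕ) < n) :
    (1 - MLO n t) i i = t * (1 / (1 + t)) ^ ((i:ℕ) + 1) := by
  simp [MLO, Matrix.sub_apply, Matrix.one_apply, hi.ne]

lemma delta_eq (n : ℕ) (t : ℝ) (ht : 0 < t) (j : Fin (n+1)) (h0 : 0 < (j:ℕ))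
    (hj : (j:ℕ) < n) : delta (MLO n t) j = (1 + t) ^ ((j:ℕ) + 1) / (2 * t) := by
  have h1t : (1 : ℝ) + t ≠ 0 := by positivity
  have ht' : t ≠ 0 := ht.ne'
  unfold delta
  have hsub : ((j:ℕ) - 1) + 1 = (j:ℕ) := Nat.succ_pred_eq_of_pos h0
  have e1 : (1 - MLO n t) ⟨(j : ℕ) - 1, lt_of_le_of_lt (Nat.sub_le _ _) j.isLt⟩ j
      = -(t * (1 / (1 + t)) ^ (j:ℕ) * (1/2)) := by
    have hne : ((j:ℕ) - 1 : ℕ) ≠ (j:ℕ) := by omega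
    rw [Matrix.sub_apply, Matrix.one_apply_ne (fun h => hne (congrArg Fin.val h))]
    simp only [MLO, Matrix.of_apply]
    simp only [show ¬((j:ℕ) < (j:ℕ) - 1) by omega, if_false, hne, if_false,
      hj.ne, if_false, hsub, show (j:ℕ) - ((j:ℕ) - 1) = 1 by omega, pow_one]
    ring
  have e2 : (1 - MLO n t) ⟨(j : ℕ) - 1, lt_of_le_of_lt (Nat.sub_le _ _) j.isLt⟩
      ⟨(j : ℕ) - 1, lt_of_le_of_lt (Nat.sub_le _ _) j.isLt⟩
      = t * (1 / (1 + t)) ^ (j:ℕ) := by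
    have := diag_eq n t ⟨(j : ℕ) - 1, lt_of_le_of_lt (Nat.sub_le _ _) j.isLt⟩ (by simp; omega)
    simpa [hsub] using this
  have e3 : (1 - MLO n t) j j = t * (1 / (1 + t)) ^ ((j:ℕ)+1) := diag_eq n t j hj
  rw [e1, e2, e3]
  have hp : ((1:ℝ) + t) ^ (j:ℕ) ≠ 0 := pow_ne_zero _ h1t
  have hp1 : ((1:ℝ) + t) ^ ((j:ℕ)+1) ≠ 0 := pow_ne_zero _ h1t
  field_simp
  have hinv : ((1:ℝ)+t)⁻¹ ^ (j:ℕ) * (1+t)^(j:ℕ) = 1 := by rw [inv_pow, inv_mul_cancel₀ hp]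
  have hu : ((1:ℝ)+t)⁻¹ * (1+t) = 1 := inv_mul_cancel₀ h1t
  linear_combination (-(1+t)*(1+t)⁻¹) * hinv - hu

lemma half_sum (n : ℕ) : ∑ i ∈ Finset.range n, ((1:ℝ)/2) ^ (i+1) = 1 - (1/2)^n := by
  induction n with
  | zero => simp
  | succ n ih => rw [Finset.sum_range_succ, ih]; ring

lemma key (t : ℝ) (ht : 0 < t) : ∀ n, 1 ≤ n →
    ∑ i ∈ Finset.range n, ((1:ℝ)/2) ^ (i+1) *
      ((1 + t) ^ (i+1) / t + ∑ j ∈ Finset.Ioo i n, (1 + t) ^ (j+1) / (2*t))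
    = (1 + t) / (2 * t ^ 2) * ((1 + t) ^ n - 1) := by
  have ht' : t ≠ 0 := ht.ne'
  intro n
  induction n with
  | zero => omega
  | succ n ih =>
    intro _
    rcases Nat.eq_zero_or_pos n with rfl | hn
    · have hE : Finset.Ioo 0 1 = (∅ : Finset ℕ) := by decide
      simp [hE]
      field_simp
    · have hIoo : ∀ i ∈ Finset.range n, Finset.Ioo i (n+1) = insert n (Finset.Ioo i n) := by
        intro i hi
        simp only [Finset.mem_range] at hi
        ext x
        simp [Finset.mem_Ioo, Finset.mem_insert]
        omega
      rw [Finset.sum_range_succ]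
      have hstep : ∑ i ∈ Finset.range n, ((1:ℝ)/2) ^ (i+1) *
          ((1 + t) ^ (i+1) / t + ∑ j ∈ Finset.Ioo i (n+1), (1 + t) ^ (j+1) / (2*t))
          = (∑ i ∈ Finset.range n, ((1:ℝ)/2) ^ (i+1) *
            ((1 + t) ^ (i+1) / t + ∑ j ∈ Finset.Ioo i n, (1 + t) ^ (j+1) / (2*t)))
            + (1 - (1/2)^n) * ((1 + t) ^ (n+1) / (2*t)) := by
        rw [← half_sum, Finset.sum_mul, ← Finset.sum_add_distrib]
        refine Finset.sum_congr rfl fun i hi => ?_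
        rw [hIoo i hi, Finset.sum_insert (by simp)]
        ring
      have hE : Finset.Ioo n (n+1) = (∅ : Finset ℕ) := by
        ext x; simp
      rw [hstep, ih hn, hE, Finset.sum_empty]
      field_simp
      ring

theorem leadingones_expected_time (n : ℕ) (hn : 1 ≤ n) (t : ℝ) (ht : 0 < t) :
    ∑ i : Fin (n + 1),
        (if (i : ℕ) < n then
          pLO n i * (1 / (1 - MLO n t) i i +
            ∑ j : Fin (n + 1),
              (if (i : ℕ) < (j : ℕ) ∧ (j : ℕ) < n then delta (MLO n t) j else 0))
        else 0) =
      (1 + t) / (2 * t ^ 2) * ((1 + t) ^ n - 1) := by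
  have h1t : (1 : ℝ) + t ≠ 0 := by positivity
  have ht' : t ≠ 0 := ht.ne'
  set F : ℕ → ℝ := fun i =>
    if i < n then ((1:ℝ)/2) ^ (i+1) *
      ((1 + t) ^ (i+1) / t + ∑ j ∈ Finset.Ioo i n, (1 + t) ^ (j+1) / (2*t))
    else 0 with hF
  have hterm : ∀ i : Fin (n+1),
      (if (i : ℕ) < n then
        pLO n i * (1 / (1 - MLO n t) i i +
          ∑ j : Fin (n + 1),
            (if (i : ℕ) < (j : ℕ) ∧ (j : ℕ) < n then delta (MLO n t) j else 0))
      else 0) = F (i : ℕ) := by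
    intro i
    by_cases hi : (i : ℕ) < n
    · rw [hF]
      simp only [hi, if_true]
      have hp : pLO n i = ((1:ℝ)/2) ^ ((i:ℕ)+1) := by simp [pLO, hi.ne]
      have hd : 1 / (1 - MLO n t) i i = (1 + t) ^ ((i:ℕ)+1) / t := by
        rw [diag_eq n t i hi]
        rw [div_pow, one_pow]
        field_simp
      have hs : (∑ j : Fin (n + 1),
            (if (i : ℕ) < (j : ℕ) ∧ (j : ℕ) < n then delta (MLO n t) j else 0))
          = ∑ j ∈ Finset.Ioo (i:ℕ) n, (1 + t) ^ (j+1) / (2*t) := by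
        have h1 : ∀ j : Fin (n+1),
            (if (i : ℕ) < (j : ℕ) ∧ (j : ℕ) < n then delta (MLO n t) j else 0)
            = (fun k => if (i : ℕ) < k ∧ k < n then (1 + t) ^ (k+1) / (2*t) else 0) (j : ℕ) := by
          intro j
          by_cases hj : (i : ℕ) < (j : ℕ) ∧ (j : ℕ) < n
          · simp only [hj, if_true]
            exact delta_eq n t ht j (by omega) hj.2
          · simp only
            rw [if_neg hj, if_neg hj]
        rw [Finset.sum_congr rfl (fun j _ => h1 j),
          Fin.sum_univ_eq_sum_range (fun k => if (i : ℕ) < k ∧ k < n then (1 + t) ^ (k+1) / (2*t) else 0) (n+1),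
          ← Finset.sum_filter]
        congr 1
        ext x
        simp [Finset.mem_Ioo]
        omega
      rw [hp, hd, hs]
    · simp [hF, hi]
  rw [Finset.sum_congr rfl (fun i _ => hterm i), Fin.sum_univ_eq_sum_range F (n+1),
    Finset.sum_range_succ]
  have hFn : F n = 0 := by simp [hF]
  rw [hFn, add_zero]
  have : ∑ i ∈ Finset.range n, F i = ∑ i ∈ Finset.range n, ((1:ℝ)/2) ^ (i+1) *
      ((1 + t) ^ (i+1) / t + ∑ j ∈ Finset.Ioo i n, (1 + t) ^ (j+1) / (2*t)) := by
    refine Finset.sum_congr rfl fun i hi => ?_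
    simp only [Finset.mem_range] at hi
    simp [hF, hi]
  rw [this, key t ht n hn]
end

section
/- Let c > 0 and 0 < s. Define T(n) = ((1+c/n^s)/(2(c/n^s)²))·((1+c/n^s)^n − 1). If s ≥ 1, then T(n) = Θ(n^{s+1}); in particular for s = 1, T(n) = Θ(n²). -/
open Filter Asymptotics

lemma lo_key (c s : ℝ) (hc : 0 < c) (hs : 1 ≤ s) {n : ℕ} (hn : 1 ≤ n) :
    ((n : ℝ) ^ (s+1)) / (2*c) ≤
      ((1 + c / (n : ℝ) ^ s) / (2 * (c / (n : ℝ) ^ s) ^ 2)) *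
          ((1 + c / (n : ℝ) ^ s) ^ n - 1) ∧
    ((1 + c / (n : ℝ) ^ s) / (2 * (c / (n : ℝ) ^ s) ^ 2)) *
          ((1 + c / (n : ℝ) ^ s) ^ n - 1) ≤
      ((1+c) * Real.exp c / (2*c)) * (n : ℝ) ^ (s+1) := by
  have hn1 : (1:ℝ) ≤ n := by exact_mod_cast hn
  have hn0 : (0:ℝ) < n := lt_of_lt_of_le one_pos hn1
  have hP1 : (1:ℝ) ≤ (n:ℝ) ^ s := by
    calc (1:ℝ) = (1:ℝ) ^ s := (Real.one_rpow s).symm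
    _ ≤ (n:ℝ) ^ s := Real.rpow_le_rpow zero_le_one hn1 (by linarith)
  have hP0 : (0:ℝ) < (n:ℝ) ^ s := lt_of_lt_of_le one_pos hP1
  set P := (n:ℝ) ^ s with hP
  set t := c / P with htdef
  have ht0 : 0 < t := div_pos hc hP0
  have htc : t ≤ c := div_le_self hc.le hP1
  have hnP : (n:ℝ) ≤ P := by
    calc (n:ℝ) = (n:ℝ) ^ (1:ℝ) := (Real.rpow_one _).symm
    _ ≤ (n:ℝ) ^ s := Real.rpow_le_rpow_of_exponent_le hn1 hs
  have hnt : (n:ℝ) * t ≤ c := by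
    rw [htdef]
    rw [mul_div_assoc']
    rw [div_le_iff₀ hP0]
    nlinarith
  have hs1 : (n:ℝ) ^ (s+1) = P * n := by
    rw [Real.rpow_add hn0, Real.rpow_one, hP]
  have hB : 1 + (n:ℝ) * t ≤ (1+t)^n := one_add_mul_le_pow (by linarith) n
  have hE : (1+t)^n ≤ Real.exp ((n:ℝ)*t) := by
    have h1 : 1 + t ≤ Real.exp t := by linarith [Real.add_one_le_exp t]
    calc (1+t)^n ≤ (Real.exp t)^n := pow_le_pow_left₀ (by positivity) h1 n
    _ = Real.exp ((n:ℝ)*t) := (Real.exp_nat_mul t n).symm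
  have hE2 : Real.exp ((n:ℝ)*t) - 1 ≤ (n:ℝ)*t * Real.exp c := by
    have hx : (0:ℝ) ≤ (n:ℝ)*t := by positivity
    have h1 : -((n:ℝ)*t) + 1 ≤ Real.exp (-((n:ℝ)*t)) := Real.add_one_le_exp _
    have h2 : Real.exp (-((n:ℝ)*t)) = (Real.exp ((n:ℝ)*t))⁻¹ := Real.exp_neg _
    have h3 : 0 < Real.exp ((n:ℝ)*t) := Real.exp_pos _
    have h4 : Real.exp ((n:ℝ)*t) - 1 ≤ (n:ℝ)*t * Real.exp ((n:ℝ)*t) := by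
      rw [h2] at h1
      have := mul_le_mul_of_nonneg_right h1 h3.le
      rw [inv_mul_cancel₀ h3.ne'] at this
      nlinarith
    have h5 : Real.exp ((n:ℝ)*t) ≤ Real.exp c := Real.exp_le_exp.mpr hnt
    nlinarith
  have hD0 : (0:ℝ) ≤ (1+t)^n - 1 := by nlinarith
  constructor
  · have hle : ((n:ℝ)*t) / (2*t^2) ≤ (1+t)/(2*t^2) * ((1+t)^n - 1) := by
      rw [div_mul_eq_mul_div]
      apply div_le_div_of_nonneg_right ?_ (by positivity)
      nlinarith
    refine le_trans (le_of_eq ?_) hle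
    rw [hs1, htdef]
    field_simp
  · have hle : (1+t)/(2*t^2) * ((1+t)^n - 1) ≤ (1+c)/(2*t^2) * ((n:ℝ)*t*Real.exp c) := by
      apply mul_le_mul (by gcongr) (by nlinarith) hD0 (by positivity)
    refine le_trans hle (le_of_eq ?_)
    rw [hs1, htdef]
    field_simp

theorem leadingones_time_theta_polynomial (c s : ℝ) (hc : 0 < c) (hs0 : 0 < s)
    (hs : 1 ≤ s) :
    (fun n : ℕ =>
        ((1 + c / (n : ℝ) ^ s) / (2 * (c / (n : ℝ) ^ s) ^ 2)) *
          ((1 + c / (n : ℝ) ^ s) ^ n - 1)) =Θ[atTop]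
      fun n : ℕ => (n : ℝ) ^ (s + 1) := by
  constructor
  · rw [isBigO_iff]
    refine ⟨(1+c) * Real.exp c / (2*c), ?_⟩
    filter_upwards [eventually_ge_atTop 1] with n hn
    obtain ⟨h1, h2⟩ := lo_key c s hc hs hn
    have hg0 : (0:ℝ) ≤ (n:ℝ) ^ (s+1) := Real.rpow_nonneg (Nat.cast_nonneg n) _
    have hf0 : (0:ℝ) ≤ ((1 + c / (n : ℝ) ^ s) / (2 * (c / (n : ℝ) ^ s) ^ 2)) *
          ((1 + c / (n : ℝ) ^ s) ^ n - 1) := by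
      refine le_trans ?_ h1; positivity
    rw [Real.norm_eq_abs, Real.norm_eq_abs, abs_of_nonneg hf0, abs_of_nonneg hg0]
    exact h2
  · rw [isBigO_iff]
    refine ⟨2*c, ?_⟩
    filter_upwards [eventually_ge_atTop 1] with n hn
    obtain ⟨h1, h2⟩ := lo_key c s hc hs hn
    have hg0 : (0:ℝ) ≤ (n:ℝ) ^ (s+1) := Real.rpow_nonneg (Nat.cast_nonneg n) _
    have hf0 : (0:ℝ) ≤ ((1 + c / (n : ℝ) ^ s) / (2 * (c / (n : ℝ) ^ s) ^ 2)) *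
          ((1 + c / (n : ℝ) ^ s) ^ n - 1) := by
      refine le_trans ?_ h1; positivity
    rw [Real.norm_eq_abs, Real.norm_eq_abs, abs_of_nonneg hf0, abs_of_nonneg hg0]
    rw [div_le_iff₀ (by positivity : (0:ℝ) < 2*c)] at h1
    linarith [h1]
end

section
/- Let n ≥ 1 and t > 0. Define T(n,t) = (1/(t·n!))·∑_{i=1}^{n−1} i·i!·( ∏_{r=i}^{n−1}(1+r·t) + ∑_{k=1}^{i−1} (k/(k+1))·∏_{r=k}^{n−1}(1+r·t) ). Then T(n,t) ≥ (n−2)/(2t). -/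
open Filter Asymptotics

/-- Exact expected optimization time of BACO on Sorting with `n` keys and pheromone ratio `t`. -/
noncomputable def Tsort (n : ℕ) (t : ℝ) : ℝ :=
  (1 / (t * (Nat.factorial n : ℝ))) *
    ∑ i ∈ Finset.Icc 1 (n - 1),
      (i : ℝ) * (Nat.factorial i : ℝ) *
        ((∏ r ∈ Finset.Icc i (n - 1), (1 + (r : ℝ) * t)) +
          ∑ k ∈ Finset.Icc 1 (i - 1),
            ((k : ℝ) / ((k : ℝ) + 1)) * ∏ r ∈ Finset.Icc k (n - 1), (1 + (r : ℝ) * t))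

theorem sorting_time_lower_bound (n : ℕ) (hn : 1 ≤ n) (t : ℝ) (ht : 0 < t) :
    ((n : ℝ) - 2) / (2 * t) ≤ Tsort n t := by
  obtain ⟨m, rfl⟩ : ∃ m, n = m + 1 := ⟨n - 1, (Nat.succ_pred_eq_of_pos hn).symm⟩
  unfold Tsort
  simp only [Nat.add_sub_cancel]
  have hprod : ∀ k : ℕ, (1:ℝ) ≤ ∏ r ∈ Finset.Icc k m, (1 + (r : ℝ) * t) := by
    intro k
    calc (1:ℝ) = ∏ _r ∈ Finset.Icc k m, (1:ℝ) := by rw [Finset.prod_const_one]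
      _ ≤ ∏ r ∈ Finset.Icc k m, (1 + (r : ℝ) * t) := by
          apply Finset.prod_le_prod
          · intro r _; norm_num
          · intro r _
            have : (0:ℝ) ≤ (r:ℝ) * t := mul_nonneg (Nat.cast_nonneg r) ht.le
            linarith
  have hS : ∀ i : ℕ, (0:ℝ) ≤ ∑ k ∈ Finset.Icc 1 (i-1),
      ((k:ℝ)/((k:ℝ)+1)) * ∏ r ∈ Finset.Icc k m, (1 + (r:ℝ)*t) := by
    intro i
    apply Finset.sum_nonneg
    intro k _
    have h1 := hprod k
    have h2 : (0:ℝ) ≤ (k:ℝ)/((k:ℝ)+1) := by positivity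
    nlinarith
  have hterm : ∀ i ∈ Finset.Icc 1 m, (0:ℝ) ≤ (i:ℝ) * (Nat.factorial i : ℝ) *
      ((∏ r ∈ Finset.Icc i m, (1 + (r : ℝ) * t)) +
        ∑ k ∈ Finset.Icc 1 (i - 1),
          ((k : ℝ) / ((k : ℝ) + 1)) * ∏ r ∈ Finset.Icc k m, (1 + (r : ℝ) * t)) := by
    intro i _
    have h1 := hprod i
    have h2 := hS i
    have h3 : (0:ℝ) ≤ (i:ℝ) * (Nat.factorial i : ℝ) := by positivity
    nlinarith
  rcases Nat.eq_zero_or_pos m with hm | hm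
  · subst hm
    simp only [show Finset.Icc 1 0 = (∅ : Finset ℕ) from rfl, Finset.sum_empty, mul_zero]
    push_cast
    have h2t : (0:ℝ) < 2 * t := by linarith
    rw [div_le_iff₀ h2t]
    nlinarith
  · -- m ≥ 1
    have hmR : (1:ℝ) ≤ (m:ℝ) := by exact_mod_cast hm
    -- bound the inner sum for i = m
    have hhalf : ∀ k ∈ Finset.Icc 1 (m-1), (1/2 : ℝ) ≤
        ((k:ℝ)/((k:ℝ)+1)) * ∏ r ∈ Finset.Icc k m, (1 + (r:ℝ)*t) := by
      intro k hk
      have hk1 : 1 ≤ k := (Finset.mem_Icc.mp hk).1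
      have hkR : (1:ℝ) ≤ (k:ℝ) := by exact_mod_cast hk1
      have hp := hprod k
      have hq : (1/2 : ℝ) ≤ (k:ℝ)/((k:ℝ)+1) := by
        rw [div_le_div_iff₀ (by norm_num) (by linarith)]
        linarith
      nlinarith
    have hSm : ((m:ℝ) - 1)/2 ≤ ∑ k ∈ Finset.Icc 1 (m-1),
        ((k:ℝ)/((k:ℝ)+1)) * ∏ r ∈ Finset.Icc k m, (1 + (r:ℝ)*t) := by
      have h1 := Finset.sum_le_sum hhalf
      have h2 : ∑ _k ∈ Finset.Icc 1 (m-1), (1/2 : ℝ) = ((m:ℝ)-1)/2 := by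
        rw [Finset.sum_const, Nat.card_Icc]
        have : m - 1 + 1 - 1 = m - 1 := by omega
        rw [this, nsmul_eq_mul, Nat.cast_sub hm]
        push_cast
        ring
      linarith [h1, h2.ge]
    have hkey : (m:ℝ) * (Nat.factorial m : ℝ) * (1 + ((m:ℝ)-1)/2) ≤
        (m:ℝ) * (Nat.factorial m : ℝ) *
          ((∏ r ∈ Finset.Icc m m, (1 + (r : ℝ) * t)) +
            ∑ k ∈ Finset.Icc 1 (m - 1),
              ((k : ℝ) / ((k : ℝ) + 1)) * ∏ r ∈ Finset.Icc k m, (1 + (r : ℝ) * t)) := by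
      have hp := hprod m
      have hmf : (0:ℝ) ≤ (m:ℝ) * (Nat.factorial m : ℝ) := by positivity
      have : 1 + ((m:ℝ)-1)/2 ≤
          (∏ r ∈ Finset.Icc m m, (1 + (r : ℝ) * t)) +
            ∑ k ∈ Finset.Icc 1 (m - 1),
              ((k : ℝ) / ((k : ℝ) + 1)) * ∏ r ∈ Finset.Icc k m, (1 + (r : ℝ) * t) := by
        linarith
      exact mul_le_mul_of_nonneg_left this hmf
    have hsingle := Finset.single_le_sum hterm (Finset.mem_Icc.mpr ⟨hm, le_refl m⟩)
    have hsum_ge : (m:ℝ) * (Nat.factorial m : ℝ) * (1 + ((m:ℝ)-1)/2) ≤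
        ∑ i ∈ Finset.Icc 1 m,
          (i : ℝ) * (Nat.factorial i : ℝ) *
            ((∏ r ∈ Finset.Icc i m, (1 + (r : ℝ) * t)) +
              ∑ k ∈ Finset.Icc 1 (i - 1),
                ((k : ℝ) / ((k : ℝ) + 1)) * ∏ r ∈ Finset.Icc k m, (1 + (r : ℝ) * t)) :=
      le_trans hkey hsingle
    have hfacpos : (0:ℝ) < (Nat.factorial (m+1) : ℝ) := by
      exact_mod_cast Nat.factorial_pos (m+1)
    have hc : (0:ℝ) ≤ 1 / (t * (Nat.factorial (m+1) : ℝ)) := by positivity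
    have hchain := mul_le_mul_of_nonneg_left hsum_ge hc
    refine le_trans ?_ hchain
    have hfact : ((Nat.factorial (m+1) : ℕ) : ℝ) = ((m:ℝ)+1) * (Nat.factorial m : ℝ) := by
      rw [Nat.factorial_succ]
      push_cast
      ring
    rw [hfact]
    have hmfpos : (0:ℝ) < (Nat.factorial m : ℝ) := by
      exact_mod_cast Nat.factorial_pos m
    have heq : 1 / (t * (((m:ℝ)+1) * (Nat.factorial m : ℝ))) *
        ((m:ℝ) * (Nat.factorial m : ℝ) * (1 + ((m:ℝ)-1)/2)) = (m:ℝ) / (2*t) := by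
      field_simp
      ring
    rw [heq]
    push_cast
    have h2t : (0:ℝ) < 2 * t := by linarith
    rw [div_le_div_iff₀ h2t h2t]
    nlinarith
end

section
/- Let n ≥ 1 and t > 0. Define T(n,t) = (1/(t·n!))·∑_{i=1}^{n−1} i·i!·( ∏_{r=i}^{n−1}(1+r·t) + ∑_{k=1}^{i−1} (k/(k+1))·∏_{r=k}^{n−1}(1+r·t) ). Then T(n,t) ≤ (n/t)·(1+n·t)^n. -/
open Filter Asymptotics

lemma aux_nat_sum (n : ℕ) :
    ∑ i ∈ Finset.Icc 1 (n - 1), i * i * Nat.factorial i ≤ n * Nat.factorial n := by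
  induction n with
  | zero => simp
  | succ m ih =>
    rcases Nat.eq_zero_or_pos m with hm | hm
    · subst hm; simp
    · have hm' : m - 1 + 1 = m := by omega
      rw [Nat.succ_sub_one, ← hm', Finset.sum_Icc_succ_top (by omega : 1 ≤ m - 1 + 1), hm']
      calc ∑ i ∈ Finset.Icc 1 (m-1), i * i * Nat.factorial i + m * m * Nat.factorial m
          ≤ m * Nat.factorial m + m * m * Nat.factorial m := by omega
        _ = m * ((m+1) * Nat.factorial m) := by ring
        _ ≤ (m+1) * ((m+1) * Nat.factorial m) := Nat.mul_le_mul_right _ (by omega)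
        _ = (m+1) * Nat.factorial (m+1) := by rw [Nat.factorial_succ]

theorem sorting_time_upper_bound (n : ℕ) (hn : 1 ≤ n) (t : ℝ) (ht : 0 < t) :
    Tsort n t ≤ ((n : ℝ) / t) * (1 + (n : ℝ) * t) ^ n := by
  have hnt : (0:ℝ) ≤ (n:ℝ) * t := by positivity
  have hb1 : (1:ℝ) ≤ 1 + (n:ℝ) * t := by linarith
  set B : ℝ := (1 + (n:ℝ) * t) ^ (n - 1) with hB
  have hB0 : 0 ≤ B := by positivity
  have hP : ∀ k, 1 ≤ k → ∏ r ∈ Finset.Icc k (n - 1), (1 + (r : ℝ) * t) ≤ B := by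
    intro k hk
    have h1 : ∏ r ∈ Finset.Icc k (n - 1), (1 + (r : ℝ) * t)
        ≤ (1 + (n:ℝ) * t) ^ (Finset.Icc k (n-1)).card := by
      rw [← Finset.prod_const]
      apply Finset.prod_le_prod
      · intro r hr
        have : (0:ℝ) ≤ (r:ℝ) * t := by positivity
        linarith
      · intro r hr
        have hr' : r ≤ n - 1 := (Finset.mem_Icc.mp hr).2
        have : (r:ℝ) ≤ (n:ℝ) := by exact_mod_cast (by omega : r ≤ n)
        nlinarith
    have h2 : (Finset.Icc k (n-1)).card ≤ n - 1 := by
      rw [Nat.card_Icc]; omega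
    exact h1.trans (pow_le_pow_right₀ hb1 h2)
  have hPnn : ∀ k : ℕ, 0 ≤ ∏ r ∈ Finset.Icc k (n - 1), (1 + (r : ℝ) * t) := by
    intro k
    apply Finset.prod_nonneg
    intro r hr
    have : (0:ℝ) ≤ (r:ℝ) * t := by positivity
    linarith
  have hbr : ∀ i ∈ Finset.Icc 1 (n-1),
      ((∏ r ∈ Finset.Icc i (n - 1), (1 + (r : ℝ) * t)) +
          ∑ k ∈ Finset.Icc 1 (i - 1),
            ((k : ℝ) / ((k : ℝ) + 1)) * ∏ r ∈ Finset.Icc k (n - 1), (1 + (r : ℝ) * t))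
        ≤ (i:ℝ) * B := by
    intro i hi
    obtain ⟨hi1, hi2⟩ := Finset.mem_Icc.mp hi
    have hsum : ∑ k ∈ Finset.Icc 1 (i - 1),
        ((k : ℝ) / ((k : ℝ) + 1)) * ∏ r ∈ Finset.Icc k (n - 1), (1 + (r : ℝ) * t)
        ≤ ∑ _k ∈ Finset.Icc 1 (i - 1), B := by
      apply Finset.sum_le_sum
      intro k hk
      have hk1 : 1 ≤ k := (Finset.mem_Icc.mp hk).1
      have hfrac : (k : ℝ) / ((k : ℝ) + 1) ≤ 1 := by
        rw [div_le_one (by positivity)]; linarith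
      calc ((k : ℝ) / ((k : ℝ) + 1)) * ∏ r ∈ Finset.Icc k (n - 1), (1 + (r : ℝ) * t)
          ≤ 1 * ∏ r ∈ Finset.Icc k (n - 1), (1 + (r : ℝ) * t) :=
            mul_le_mul_of_nonneg_right hfrac (hPnn k)
        _ = ∏ r ∈ Finset.Icc k (n - 1), (1 + (r : ℝ) * t) := one_mul _
        _ ≤ B := hP k hk1
    have hcardn : (Finset.Icc 1 (i-1)).card = i - 1 := by rw [Nat.card_Icc]; omega
    have hcast : ((i - 1 : ℕ) : ℝ) = (i:ℝ) - 1 := by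
      rw [Nat.cast_sub hi1]; simp
    have hcard : ∑ _k ∈ Finset.Icc 1 (i - 1), B = ((i:ℝ) - 1) * B := by
      rw [Finset.sum_const, hcardn, nsmul_eq_mul, hcast]
    have := hP i hi1
    nlinarith [hsum, hcard]
  -- sum bound
  have hS : ∑ i ∈ Finset.Icc 1 (n - 1),
      (i : ℝ) * (Nat.factorial i : ℝ) *
        ((∏ r ∈ Finset.Icc i (n - 1), (1 + (r : ℝ) * t)) +
          ∑ k ∈ Finset.Icc 1 (i - 1),
            ((k : ℝ) / ((k : ℝ) + 1)) * ∏ r ∈ Finset.Icc k (n - 1), (1 + (r : ℝ) * t))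
      ≤ ((n:ℝ) * (Nat.factorial n : ℝ)) * B := by
    have step1 : ∑ i ∈ Finset.Icc 1 (n - 1),
        (i : ℝ) * (Nat.factorial i : ℝ) *
          ((∏ r ∈ Finset.Icc i (n - 1), (1 + (r : ℝ) * t)) +
            ∑ k ∈ Finset.Icc 1 (i - 1),
              ((k : ℝ) / ((k : ℝ) + 1)) * ∏ r ∈ Finset.Icc k (n - 1), (1 + (r : ℝ) * t))
        ≤ ∑ i ∈ Finset.Icc 1 (n - 1), (i : ℝ) * (Nat.factorial i : ℝ) * ((i:ℝ) * B) := by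
      apply Finset.sum_le_sum
      intro i hi
      have hpos : (0:ℝ) ≤ (i : ℝ) * (Nat.factorial i : ℝ) := by positivity
      exact mul_le_mul_of_nonneg_left (hbr i hi) hpos
    have step2 : ∑ i ∈ Finset.Icc 1 (n - 1), (i : ℝ) * (Nat.factorial i : ℝ) * ((i:ℝ) * B)
        = ((∑ i ∈ Finset.Icc 1 (n - 1), i * i * Nat.factorial i : ℕ) : ℝ) * B := by
      push_cast
      rw [Finset.sum_mul]
      exact Finset.sum_congr rfl (fun i _ => by ring)
    have step3 : ((∑ i ∈ Finset.Icc 1 (n - 1), i * i * Nat.factorial i : ℕ) : ℝ) * B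
        ≤ ((n:ℝ) * (Nat.factorial n : ℝ)) * B := by
      apply mul_le_mul_of_nonneg_right _ hB0
      exact_mod_cast aux_nat_sum n
    calc _ ≤ _ := step1
      _ = _ := step2
      _ ≤ _ := step3
  have hfac : (0:ℝ) < (Nat.factorial n : ℝ) := by
    exact_mod_cast Nat.factorial_pos n
  have hcoef : (0:ℝ) ≤ 1 / (t * (Nat.factorial n : ℝ)) := by positivity
  have h1 : Tsort n t ≤ (1 / (t * (Nat.factorial n : ℝ))) * (((n:ℝ) * (Nat.factorial n : ℝ)) * B) :=
    mul_le_mul_of_nonneg_left hS hcoef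
  have h2 : (1 / (t * (Nat.factorial n : ℝ))) * (((n:ℝ) * (Nat.factorial n : ℝ)) * B)
      = ((n:ℝ) / t) * B := by
    field_simp
  have h3 : ((n:ℝ) / t) * B ≤ ((n : ℝ) / t) * (1 + (n : ℝ) * t) ^ n := by
    apply mul_le_mul_of_nonneg_left _ (by positivity)
    exact pow_le_pow_right₀ hb1 (Nat.sub_le n 1)
  calc Tsort n t ≤ _ := h1
    _ = _ := h2
    _ ≤ _ := h3
end

section
/- Define T(n,t) = (1/(t·n!))·∑_{i=1}^{n−1} i·i!·( ∏_{r=i}^{n−1}(1+r·t) + ∑_{k=1}^{i−1} (k/(k+1))·∏_{r=k}^{n−1}(1+r·t) ). For every function t(n) > 0, T(n, t(n)) = Ω(n³). -/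
open Filter Asymptotics Finset

lemma prod_one_add_ge (s : Finset ℕ) (t : ℝ) (ht : 0 ≤ t) :
    1 + t * ∑ r ∈ s, (r : ℝ) ≤ ∏ r ∈ s, (1 + (r : ℝ) * t) := by
  induction s using Finset.cons_induction with
  | empty => simp
  | cons a s ha ih =>
    rw [prod_cons, sum_cons]
    have hs : (0:ℝ) ≤ ∑ r ∈ s, (r : ℝ) := by positivity
    have ha' : (0:ℝ) ≤ (a : ℝ) := Nat.cast_nonneg a
    nlinarith [mul_nonneg ht hs, mul_nonneg (mul_nonneg ht ha') (mul_nonneg ht hs),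
      mul_nonneg ht ha']

set_option maxHeartbeats 1000000 in
lemma tsort_lower (n : ℕ) (t : ℝ) (hn : 3 ≤ n) (ht : 0 < t) :
    (∑ k ∈ Icc 1 (n-2), (k:ℝ) * ((n:ℝ) - k)) / 4 ≤ Tsort n t := by
  have hfacpos : ∀ k : ℕ, (0:ℝ) < ∏ r ∈ Icc k (n-1), (1 + (r:ℝ)*t) := by
    intro k
    refine Finset.prod_pos fun r _ => ?_
    have h1 : (0:ℝ) ≤ (r:ℝ) := Nat.cast_nonneg r
    nlinarith
  set F : ℕ → ℝ := fun i =>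
    (i : ℝ) * (Nat.factorial i : ℝ) *
        ((∏ r ∈ Finset.Icc i (n - 1), (1 + (r : ℝ) * t)) +
          ∑ k ∈ Finset.Icc 1 (i - 1),
            ((k : ℝ) / ((k : ℝ) + 1)) * ∏ r ∈ Finset.Icc k (n - 1), (1 + (r : ℝ) * t))
    with hFdef
  have hinner : ∀ i : ℕ, (0:ℝ) ≤ ∑ k ∈ Icc 1 (i-1),
      ((k:ℝ)/((k:ℝ)+1)) * ∏ r ∈ Icc k (n-1), (1 + (r:ℝ)*t) := by
    intro i
    refine Finset.sum_nonneg fun k _ => mul_nonneg ?_ (hfacpos k).le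
    positivity
  have hFnonneg : ∀ i : ℕ, 0 ≤ F i := by
    intro i
    refine mul_nonneg (by positivity) (by nlinarith [hfacpos i, hinner i])
  -- single term lower bound
  have h1 : F (n-1) ≤ ∑ i ∈ Icc 1 (n-1), F i :=
    Finset.single_le_sum (fun i _ => hFnonneg i) (by rw [mem_Icc]; omega)
  -- inner sum lower bound for F (n-1)
  have hidx : n - 1 - 1 = n - 2 := by omega
  set S' : ℝ := ∑ k ∈ Icc 1 (n-2), ((k:ℝ)/((k:ℝ)+1)) * ((k:ℝ) * ((n:ℝ) - k)) with hS'def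
  have h2 : t * S' ≤ ∑ k ∈ Icc 1 (n-2),
      ((k:ℝ)/((k:ℝ)+1)) * ∏ r ∈ Icc k (n-1), (1 + (r:ℝ)*t) := by
    rw [hS'def, Finset.mul_sum]
    refine Finset.sum_le_sum fun k hk => ?_
    rw [mem_Icc] at hk
    have hsum : (k:ℝ) * ((n:ℝ) - k) ≤ ∑ r ∈ Icc k (n-1), (r:ℝ) := by
      have hcard : (Icc k (n-1)).card = n - k := by rw [Nat.card_Icc]; omega
      have h3 : (Icc k (n-1)).card • (k:ℝ) ≤ ∑ r ∈ Icc k (n-1), (r:ℝ) :=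
        Finset.card_nsmul_le_sum _ _ _ (fun r hr => by
          exact_mod_cast (mem_Icc.mp hr).1)
      rw [hcard, nsmul_eq_mul, Nat.cast_sub (by omega : k ≤ n)] at h3
      linarith
    have hP : t * ((k:ℝ) * ((n:ℝ) - k)) ≤ ∏ r ∈ Icc k (n-1), (1 + (r:ℝ)*t) := by
      have := prod_one_add_ge (Icc k (n-1)) t ht.le
      nlinarith [mul_le_mul_of_nonneg_left hsum ht.le]
    have hcoef : (0:ℝ) ≤ (k:ℝ)/((k:ℝ)+1) := by positivity
    calc t * (((k:ℝ)/((k:ℝ)+1)) * ((k:ℝ) * ((n:ℝ) - k)))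
        = ((k:ℝ)/((k:ℝ)+1)) * (t * ((k:ℝ) * ((n:ℝ) - k))) := by ring
      _ ≤ _ := mul_le_mul_of_nonneg_left hP hcoef
  have h4 : ((n-1:ℕ):ℝ) * (Nat.factorial (n-1) : ℝ) * (t * S') ≤ F (n-1) := by
    rw [hFdef]
    simp only [hidx]
    have hA : (0:ℝ) ≤ ((n-1:ℕ):ℝ) * (Nat.factorial (n-1) : ℝ) := by positivity
    have hmul := mul_le_mul_of_nonneg_left h2 hA
    have hAP : (0:ℝ) ≤ ((n-1:ℕ):ℝ) * (Nat.factorial (n-1) : ℝ) * ∏ r ∈ Icc (n-1) (n-1), (1 + (r:ℝ)*t) :=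
      mul_nonneg hA (hfacpos (n-1)).le
    nlinarith [hmul, hAP]
  -- combine
  have hc : (0:ℝ) < 1 / (t * (Nat.factorial n : ℝ)) := by positivity
  have h5 : (1 / (t * (Nat.factorial n : ℝ))) * (((n-1:ℕ):ℝ) * (Nat.factorial (n-1) : ℝ) * (t * S'))
      ≤ Tsort n t := by
    rw [Tsort]
    exact mul_le_mul_of_nonneg_left (le_trans h4 h1) hc.le
  have hfact : (Nat.factorial n : ℝ) = (n:ℝ) * (Nat.factorial (n-1) : ℝ) := by
    have h : n - 1 + 1 = n := by omega
    rw [← h, Nat.factorial_succ]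
    push_cast [h]
    ring
  have heq : (1 / (t * (Nat.factorial n : ℝ))) * (((n-1:ℕ):ℝ) * (Nat.factorial (n-1) : ℝ) * (t * S'))
      = (((n-1:ℕ):ℝ)/(n:ℝ)) * S' := by
    have hfne : (Nat.factorial (n-1) : ℝ) ≠ 0 := by positivity
    have hnne : (n:ℝ) ≠ 0 := by positivity
    rw [hfact]
    field_simp
  -- arithmetic on sums
  set S : ℝ := ∑ k ∈ Icc 1 (n-2), (k:ℝ) * ((n:ℝ) - k) with hSdef
  have hSS' : S / 2 ≤ S' := by
    rw [hSdef, hS'def]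
    rw [div_eq_mul_inv, Finset.sum_mul]
    refine Finset.sum_le_sum fun k hk => ?_
    rw [mem_Icc] at hk
    have hk1 : (1:ℝ) ≤ (k:ℝ) := by exact_mod_cast hk.1
    have hkn : (k:ℝ) ≤ (n:ℝ) - 2 := by
      have : (k:ℝ) ≤ ((n-2:ℕ):ℝ) := by exact_mod_cast hk.2
      rw [Nat.cast_sub (by omega : 2 ≤ n)] at this
      exact_mod_cast this
    have hpos : (0:ℝ) ≤ (k:ℝ) * ((n:ℝ) - k) := by nlinarith
    have hcoef : (1:ℝ)/2 ≤ (k:ℝ)/((k:ℝ)+1) := by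
      rw [div_le_div_iff₀ (by norm_num) (by linarith)]
      linarith
    nlinarith
  have hS0 : 0 ≤ S := by
    rw [hSdef]
    refine Finset.sum_nonneg fun k hk => ?_
    rw [mem_Icc] at hk
    have hkn : (k:ℝ) ≤ ((n-2:ℕ):ℝ) := by exact_mod_cast hk.2
    rw [Nat.cast_sub (by omega : 2 ≤ n)] at hkn
    have : (0:ℝ) ≤ (k:ℝ) := Nat.cast_nonneg k
    nlinarith
  have ha : (1:ℝ)/2 ≤ ((n-1:ℕ):ℝ)/(n:ℝ) := by
    rw [div_le_div_iff₀ (by norm_num) (by positivity)]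
    rw [Nat.cast_sub (by omega : 1 ≤ n)]
    have : (3:ℝ) ≤ (n:ℝ) := by exact_mod_cast hn
    push_cast
    linarith
  have hS'0 : 0 ≤ S' := by linarith
  calc S / 4 = (1/2) * (S/2) := by ring
    _ ≤ (((n-1:ℕ):ℝ)/(n:ℝ)) * S' := by
        apply mul_le_mul ha hSS' (by linarith) (by linarith)
    _ = _ := heq.symm
    _ ≤ Tsort n t := h5

lemma sum_closed (m : ℕ) (c : ℝ) :
    ∑ k ∈ Icc 1 m, (k : ℝ) * (c - k) =
      c * m * (m + 1) / 2 - m * (m + 1) * (2 * m + 1) / 6 := by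
  induction m with
  | zero => simp
  | succ m ih =>
    rw [Finset.sum_Icc_succ_top (by omega : 1 ≤ m + 1), ih]
    push_cast
    ring

theorem sorting_time_omega_cubed (t : ℕ → ℝ) (ht : ∀ n, 0 < t n) :
    (fun n : ℕ => (n : ℝ) ^ 3) =O[atTop] fun n : ℕ => Tsort n (t n) := by
  rw [isBigO_iff]
  refine ⟨28, ?_⟩
  filter_upwards [eventually_ge_atTop 100] with n hn
  have hn3 : 3 ≤ n := by omega
  have hlow := tsort_lower n (t n) hn3 (ht n)
  have hx : (100:ℝ) ≤ (n:ℝ) := by exact_mod_cast hn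
  have hcast : ((n-2:ℕ):ℝ) = (n:ℝ) - 2 := by
    rw [Nat.cast_sub (by omega : 2 ≤ n)]; norm_num
  have hsum : ∑ k ∈ Icc 1 (n-2), (k:ℝ) * ((n:ℝ) - k)
      = (n:ℝ)*((n:ℝ)-2)*(((n:ℝ)-2)+1)/2
        - ((n:ℝ)-2)*(((n:ℝ)-2)+1)*(2*((n:ℝ)-2)+1)/6 := by
    rw [sum_closed (n-2) (n:ℝ), hcast]
  rw [hsum] at hlow
  have hT : (n:ℝ)^3/28 ≤ Tsort n (t n) := by
    have h2 : (100:ℝ)*(n:ℝ) ≤ (n:ℝ)^2 := by nlinarith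
    have h3 : (100:ℝ)*(n:ℝ)^2 ≤ (n:ℝ)^3 := by nlinarith
    nlinarith [hlow]
  rw [Real.norm_eq_abs, Real.norm_eq_abs,
    abs_of_nonneg (by positivity : (0:ℝ) ≤ (n:ℝ)^3)]
  calc (n:ℝ)^3 ≤ 28 * Tsort n (t n) := by linarith
    _ ≤ 28 * |Tsort n (t n)| := by
        have := le_abs_self (Tsort n (t n)); linarith
end

section
/- Define T(n,t) = (1/(t·n!))·∑_{i=1}^{n−1} i·i!·( ∏_{r=i}^{n−1}(1+r·t) + ∑_{k=1}^{i−1} (k/(k+1))·∏_{r=k}^{n−1}(1+r·t) ). If t = t(n) satisfies t(n) > 0 and t(n) = O(1/n²), then T(n,t(n)) = Θ(n/t(n)). -/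
open Filter Asymptotics

lemma prod_one_le_aux (n k : ℕ) (t : ℝ) (ht : 0 ≤ t) :
    1 ≤ ∏ r ∈ Finset.Icc k (n - 1), (1 + (r : ℝ) * t) := by
  have h := Finset.prod_le_prod (s := Finset.Icc k (n-1))
    (f := fun _ : ℕ => (1:ℝ)) (g := fun r : ℕ => 1 + (r:ℝ) * t)
    (fun _ _ => zero_le_one)
    (fun r _ => by
      have : (0:ℝ) ≤ (r:ℝ) * t := mul_nonneg (Nat.cast_nonneg r) ht
      linarith)
  simpa using h

lemma prod_nonneg_aux (n k : ℕ) (t : ℝ) (ht : 0 ≤ t) :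
    0 ≤ ∏ r ∈ Finset.Icc k (n - 1), (1 + (r : ℝ) * t) :=
  le_trans zero_le_one (prod_one_le_aux n k t ht)

lemma prod_le_aux (n k : ℕ) (hn : 1 ≤ n) (t C : ℝ) (ht : 0 ≤ t) (hC : (n : ℝ) ^ 2 * t ≤ C) :
    ∏ r ∈ Finset.Icc k (n - 1), (1 + (r : ℝ) * t) ≤ Real.exp C := by
  have h1 : ∏ r ∈ Finset.Icc k (n - 1), (1 + (r : ℝ) * t)
      ≤ ∏ r ∈ Finset.Icc k (n - 1), Real.exp ((r : ℝ) * t) := by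
    apply Finset.prod_le_prod
    · intro r _; positivity
    · intro r _
      have := Real.add_one_le_exp ((r : ℝ) * t)
      linarith
  rw [← Real.exp_sum] at h1
  refine h1.trans (Real.exp_le_exp.2 ?_)
  have hsum : ∑ r ∈ Finset.Icc k (n - 1), (r : ℝ) ≤ (n : ℝ) * n := by
    calc ∑ r ∈ Finset.Icc k (n - 1), (r : ℝ)
        ≤ (Finset.Icc k (n - 1)).card • (n : ℝ) := by
          apply Finset.sum_le_card_nsmul
          intro r hr
          have : r ≤ n - 1 := (Finset.mem_Icc.1 hr).2
          exact_mod_cast this.trans (Nat.sub_le n 1)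
      _ = ((Finset.Icc k (n - 1)).card : ℝ) * n := by rw [nsmul_eq_mul]
      _ ≤ (n : ℝ) * n := by
          apply mul_le_mul_of_nonneg_right _ (Nat.cast_nonneg n)
          have hc : (Finset.Icc k (n - 1)).card = n - 1 + 1 - k := Nat.card_Icc k (n - 1)
          have : (Finset.Icc k (n - 1)).card ≤ n := by omega
          exact_mod_cast this
  calc ∑ r ∈ Finset.Icc k (n - 1), (r : ℝ) * t
      = (∑ r ∈ Finset.Icc k (n - 1), (r : ℝ)) * t := by rw [Finset.sum_mul]
    _ ≤ (n : ℝ) ^ 2 * t := by nlinarith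
    _ ≤ C := hC

lemma sum_fac_aux (m : ℕ) :
    ∑ i ∈ Finset.Icc 1 m, (i : ℝ) * (Nat.factorial i : ℝ)
      = (Nat.factorial (m + 1) : ℝ) - 1 := by
  induction m with
  | zero => simp
  | succ m ih =>
    rw [Finset.sum_Icc_succ_top (Nat.one_le_iff_ne_zero.2 (Nat.succ_ne_zero m)), ih,
      Nat.factorial_succ (m + 1)]
    push_cast
    ring

theorem sorting_time_theta_small_t (t : ℕ → ℝ) (ht : ∀ n, 0 < t n)
    (hsmall : t =O[atTop] fun n : ℕ => 1 / (n : ℝ) ^ 2) :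
    (fun n : ℕ => Tsort n (t n)) =Θ[atTop] fun n : ℕ => (n : ℝ) / t n := by
  obtain ⟨c, hc, hO⟩ := hsmall.exists_pos
  have hbnd := hO.bound
  constructor
  · -- upper bound
    rw [isBigO_iff]
    refine ⟨Real.exp c, ?_⟩
    filter_upwards [hbnd, eventually_ge_atTop 2] with n hb hn2
    have htn := ht n
    have hnR : (2:ℝ) ≤ (n:ℝ) := by exact_mod_cast hn2
    have hct : (n:ℝ)^2 * t n ≤ c := by
      rw [Real.norm_eq_abs, Real.norm_eq_abs, abs_of_pos htn,
        abs_of_pos (by positivity : (0:ℝ) < 1/(n:ℝ)^2)] at hb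
      have h2 : (0:ℝ) < (n:ℝ)^2 := by positivity
      calc (n:ℝ)^2 * t n ≤ (n:ℝ)^2 * (c * (1/(n:ℝ)^2)) :=
            mul_le_mul_of_nonneg_left hb h2.le
        _ = c := by field_simp
    have hP1 : ∀ k, 1 ≤ ∏ r ∈ Finset.Icc k (n - 1), (1 + (r : ℝ) * t n) :=
      fun k => prod_one_le_aux n k (t n) htn.le
    have hPB : ∀ k, ∏ r ∈ Finset.Icc k (n - 1), (1 + (r : ℝ) * t n) ≤ Real.exp c :=
      fun k => prod_le_aux n k (by omega) (t n) c htn.le hct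
    set S := ∑ i ∈ Finset.Icc 1 (n - 1),
      (i : ℝ) * (Nat.factorial i : ℝ) *
        ((∏ r ∈ Finset.Icc i (n - 1), (1 + (r : ℝ) * t n)) +
          ∑ k ∈ Finset.Icc 1 (i - 1),
            ((k : ℝ) / ((k : ℝ) + 1)) * ∏ r ∈ Finset.Icc k (n - 1), (1 + (r : ℝ) * t n))
      with hSdef
    have hbr_nonneg : ∀ i : ℕ, 0 ≤
        ((∏ r ∈ Finset.Icc i (n - 1), (1 + (r : ℝ) * t n)) +
          ∑ k ∈ Finset.Icc 1 (i - 1),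
            ((k : ℝ) / ((k : ℝ) + 1)) * ∏ r ∈ Finset.Icc k (n - 1), (1 + (r : ℝ) * t n)) := by
      intro i
      refine add_nonneg (prod_nonneg_aux n i (t n) htn.le) (Finset.sum_nonneg fun k _ => ?_)
      exact mul_nonneg (div_nonneg (Nat.cast_nonneg k) (by positivity))
        (prod_nonneg_aux n k (t n) htn.le)
    have hS_nonneg : 0 ≤ S := by
      refine Finset.sum_nonneg fun i _ => ?_
      exact mul_nonneg (mul_nonneg (Nat.cast_nonneg i) (Nat.cast_nonneg _)) (hbr_nonneg i)
    have hfac : (0:ℝ) < (Nat.factorial n : ℝ) := by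
      exact_mod_cast Nat.factorial_pos n
    have hT_nonneg : 0 ≤ Tsort n (t n) := by
      rw [Tsort]
      exact mul_nonneg (by positivity) hS_nonneg
    have hSle : S ≤ (n:ℝ) * Real.exp c * (Nat.factorial n : ℝ) := by
      have hstep : S ≤ ∑ i ∈ Finset.Icc 1 (n - 1),
          ((n:ℝ) * Real.exp c) * ((i : ℝ) * (Nat.factorial i : ℝ)) := by
        refine Finset.sum_le_sum fun i hi => ?_
        obtain ⟨hi1, hi2⟩ := Finset.mem_Icc.1 hi
        have hbr : ((∏ r ∈ Finset.Icc i (n - 1), (1 + (r : ℝ) * t n)) +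
            ∑ k ∈ Finset.Icc 1 (i - 1),
              ((k : ℝ) / ((k : ℝ) + 1)) * ∏ r ∈ Finset.Icc k (n - 1), (1 + (r : ℝ) * t n))
            ≤ (n:ℝ) * Real.exp c := by
          have hsum : ∑ k ∈ Finset.Icc 1 (i - 1),
              ((k : ℝ) / ((k : ℝ) + 1)) * ∏ r ∈ Finset.Icc k (n - 1), (1 + (r : ℝ) * t n)
              ≤ ((i:ℝ) - 1) * Real.exp c := by
            calc ∑ k ∈ Finset.Icc 1 (i - 1),
                ((k : ℝ) / ((k : ℝ) + 1)) * ∏ r ∈ Finset.Icc k (n - 1), (1 + (r : ℝ) * t n)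
                ≤ ∑ _k ∈ Finset.Icc 1 (i - 1), Real.exp c := by
                  refine Finset.sum_le_sum fun k _ => ?_
                  have hd : (k : ℝ) / ((k : ℝ) + 1) ≤ 1 := by
                    rw [div_le_one (by positivity)]; linarith
                  calc ((k : ℝ) / ((k : ℝ) + 1)) *
                        ∏ r ∈ Finset.Icc k (n - 1), (1 + (r : ℝ) * t n)
                      ≤ 1 * Real.exp c := by
                        apply mul_le_mul hd (hPB k) (prod_nonneg_aux n k (t n) htn.le)
                        norm_num
                    _ = Real.exp c := one_mul _
              _ = ((i - 1 : ℕ) : ℝ) * Real.exp c := by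
                  rw [Finset.sum_const, nsmul_eq_mul, Nat.card_Icc]
                  norm_num
              _ ≤ ((i:ℝ) - 1) * Real.exp c := by
                  apply mul_le_mul_of_nonneg_right _ (Real.exp_pos c).le
                  have : ((i - 1 : ℕ) : ℝ) = (i:ℝ) - 1 := by
                    rw [Nat.cast_sub hi1]; norm_num
                  linarith [this.le]
          have hexp1 : (1:ℝ) ≤ Real.exp c := Real.one_le_exp hc.le
          have hiln : (i:ℝ) ≤ (n:ℝ) := by exact_mod_cast (hi2.trans (Nat.sub_le n 1))
          have hi1R : (1:ℝ) ≤ (i:ℝ) := by exact_mod_cast hi1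
          calc _ ≤ Real.exp c + ((i:ℝ) - 1) * Real.exp c :=
                add_le_add (hPB i) hsum
            _ = (i:ℝ) * Real.exp c := by ring
            _ ≤ (n:ℝ) * Real.exp c :=
                mul_le_mul_of_nonneg_right hiln (Real.exp_pos c).le
        calc (i : ℝ) * (Nat.factorial i : ℝ) *
            ((∏ r ∈ Finset.Icc i (n - 1), (1 + (r : ℝ) * t n)) +
              ∑ k ∈ Finset.Icc 1 (i - 1),
                ((k : ℝ) / ((k : ℝ) + 1)) * ∏ r ∈ Finset.Icc k (n - 1), (1 + (r : ℝ) * t n))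
            ≤ (i : ℝ) * (Nat.factorial i : ℝ) * ((n:ℝ) * Real.exp c) := by
              apply mul_le_mul_of_nonneg_left hbr
              positivity
          _ = ((n:ℝ) * Real.exp c) * ((i : ℝ) * (Nat.factorial i : ℝ)) := by ring
      rw [← Finset.mul_sum, sum_fac_aux (n - 1)] at hstep
      have hmm : n - 1 + 1 = n := by omega
      rw [hmm] at hstep
      have hexp1 : (1:ℝ) ≤ Real.exp c := Real.one_le_exp hc.le
      nlinarith [Real.exp_pos c, hfac]
    -- now conclude
    rw [Real.norm_eq_abs, Real.norm_eq_abs, abs_of_nonneg hT_nonneg,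
      abs_of_nonneg (div_nonneg (Nat.cast_nonneg n) htn.le)]
    rw [Tsort]
    calc (1 / (t n * (Nat.factorial n : ℝ))) * S
        ≤ (1 / (t n * (Nat.factorial n : ℝ))) * ((n:ℝ) * Real.exp c * (Nat.factorial n : ℝ)) := by
          apply mul_le_mul_of_nonneg_left hSle
          positivity
      _ = Real.exp c * ((n:ℝ) / t n) := by field_simp
  · -- lower bound
    rw [isBigO_iff]
    refine ⟨4, ?_⟩
    filter_upwards [hbnd, eventually_ge_atTop 2] with n hb hn2
    have htn := ht n
    have hnR : (2:ℝ) ≤ (n:ℝ) := by exact_mod_cast hn2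
    have hP1 : ∀ k, 1 ≤ ∏ r ∈ Finset.Icc k (n - 1), (1 + (r : ℝ) * t n) :=
      fun k => prod_one_le_aux n k (t n) htn.le
    set f : ℕ → ℝ := fun i =>
      (i : ℝ) * (Nat.factorial i : ℝ) *
        ((∏ r ∈ Finset.Icc i (n - 1), (1 + (r : ℝ) * t n)) +
          ∑ k ∈ Finset.Icc 1 (i - 1),
            ((k : ℝ) / ((k : ℝ) + 1)) * ∏ r ∈ Finset.Icc k (n - 1), (1 + (r : ℝ) * t n))
      with hfdef
    have hf_nonneg : ∀ i ∈ Finset.Icc 1 (n-1), 0 ≤ f i := by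
      intro i _
      rw [hfdef]
      dsimp only
      refine mul_nonneg (mul_nonneg (Nat.cast_nonneg i) (Nat.cast_nonneg _)) ?_
      refine add_nonneg (prod_nonneg_aux n i (t n) htn.le) (Finset.sum_nonneg fun k _ => ?_)
      exact mul_nonneg (div_nonneg (Nat.cast_nonneg k) (by positivity))
        (prod_nonneg_aux n k (t n) htn.le)
    have hmem : n - 1 ∈ Finset.Icc 1 (n - 1) := Finset.mem_Icc.2 ⟨by omega, le_refl _⟩
    have hsingle : f (n-1) ≤ ∑ i ∈ Finset.Icc 1 (n-1), f i :=
      Finset.single_le_sum hf_nonneg hmem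
    -- lower bound f (n-1)
    have hinner : ((n:ℝ) - 2) * (1/2) ≤ ∑ k ∈ Finset.Icc 1 (n - 1 - 1),
        ((k : ℝ) / ((k : ℝ) + 1)) * ∏ r ∈ Finset.Icc k (n - 1), (1 + (r : ℝ) * t n) := by
      have h1 : ∀ k ∈ Finset.Icc 1 (n - 1 - 1), (1/2 : ℝ) ≤
          ((k : ℝ) / ((k : ℝ) + 1)) * ∏ r ∈ Finset.Icc k (n - 1), (1 + (r : ℝ) * t n) := by
        intro k hk
        obtain ⟨hk1, _⟩ := Finset.mem_Icc.1 hk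
        have hk1R : (1:ℝ) ≤ (k:ℝ) := by exact_mod_cast hk1
        have hd : (1/2:ℝ) ≤ (k : ℝ) / ((k : ℝ) + 1) := by
          rw [le_div_iff₀ (by positivity)]; linarith
        calc (1/2:ℝ) = (1/2) * 1 := by ring
          _ ≤ ((k : ℝ) / ((k : ℝ) + 1)) * ∏ r ∈ Finset.Icc k (n - 1), (1 + (r : ℝ) * t n) :=
              mul_le_mul hd (hP1 k) zero_le_one (by positivity)
      calc ((n:ℝ) - 2) * (1/2)
          = ((n - 1 - 1 : ℕ) : ℝ) * (1/2) := by
            have : ((n - 1 - 1 : ℕ) : ℝ) = (n:ℝ) - 2 := by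
              have h2n : (2:ℕ) ≤ n := hn2
              push_cast [Nat.cast_sub (by omega : 1 ≤ n - 1), Nat.cast_sub (by omega : 1 ≤ n)]
              ring
            rw [this]
        _ = (Finset.Icc 1 (n - 1 - 1)).card • (1/2 : ℝ) := by
            rw [Nat.card_Icc, nsmul_eq_mul]
            norm_num
        _ ≤ _ := Finset.card_nsmul_le_sum _ _ _ h1
    have hbr_lb : (n:ℝ)/2 ≤
        ((∏ r ∈ Finset.Icc (n-1) (n - 1), (1 + (r : ℝ) * t n)) +
          ∑ k ∈ Finset.Icc 1 (n - 1 - 1),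
            ((k : ℝ) / ((k : ℝ) + 1)) * ∏ r ∈ Finset.Icc k (n - 1), (1 + (r : ℝ) * t n)) := by
      have := hP1 (n-1)
      have h := hinner
      nlinarith
    have hn1R : ((n - 1 : ℕ) : ℝ) = (n:ℝ) - 1 := by
      push_cast [Nat.cast_sub (by omega : 1 ≤ n)]; ring
    have hfacm : (0:ℝ) < (Nat.factorial (n-1) : ℝ) := by
      exact_mod_cast Nat.factorial_pos (n-1)
    have hflb : ((n:ℝ) - 1) * (Nat.factorial (n-1) : ℝ) * ((n:ℝ)/2) ≤ f (n-1) := by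
      rw [hfdef]
      dsimp only
      rw [hn1R]
      apply mul_le_mul_of_nonneg_left hbr_lb
      nlinarith
    have hfacn : (Nat.factorial n : ℝ) = (n:ℝ) * (Nat.factorial (n-1) : ℝ) := by
      have h : n - 1 + 1 = n := by omega
      rw [← h, Nat.factorial_succ]
      push_cast [h]
      ring
    have hfac : (0:ℝ) < (Nat.factorial n : ℝ) := by
      exact_mod_cast Nat.factorial_pos n
    have hT_lb : ((n:ℝ) - 1) / (2 * t n) ≤ Tsort n (t n) := by
      rw [Tsort]
      have hSge : ((n:ℝ) - 1) * (Nat.factorial (n-1) : ℝ) * ((n:ℝ)/2) ≤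
          ∑ i ∈ Finset.Icc 1 (n-1), f i := hflb.trans hsingle
      calc ((n:ℝ) - 1) / (2 * t n)
          = (1 / (t n * (Nat.factorial n : ℝ))) *
              (((n:ℝ) - 1) * (Nat.factorial (n-1) : ℝ) * ((n:ℝ)/2)) := by
            rw [hfacn]
            field_simp
        _ ≤ _ := by
            apply mul_le_mul_of_nonneg_left _ (by positivity)
            exact hSge
    have hT_nonneg : 0 ≤ Tsort n (t n) := by
      refine le_trans ?_ hT_lb
      apply div_nonneg (by linarith) (by positivity)
    rw [Real.norm_eq_abs, Real.norm_eq_abs, abs_of_nonneg hT_nonneg,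
      abs_of_nonneg (div_nonneg (Nat.cast_nonneg n) htn.le)]
    have h2t : (0:ℝ) < 2 * t n := by positivity
    have h4 : (n:ℝ) / t n ≤ 4 * (((n:ℝ) - 1) / (2 * t n)) := by
      rw [← mul_div_assoc, div_le_div_iff₀ htn h2t]
      nlinarith
    linarith [mul_le_mul_of_nonneg_left hT_lb (by norm_num : (0:ℝ) ≤ 4)]
end

section
/- Define T(n,t) as the exact Sorting formula with t = c/n^s for constants c > 0 and s ≥ 2. Then T(n, c/n^s) = Θ(n^{s+1}). -/
open Filter Asymptotics

lemma sum_sq_factorial (m : ℕ) :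
    ∑ i ∈ Finset.Icc 1 m, i ^ 2 * i.factorial ≤ (m + 2).factorial := by
  induction m with
  | zero => simp [Nat.factorial]
  | succ m ih =>
    rw [Finset.sum_Icc_succ_top (by omega)]
    have h1 : (m + 3).factorial = (m + 3) * ((m + 2) * (m + 1).factorial) := by
      rw [Nat.factorial_succ, Nat.factorial_succ]
    have h2 : (m + 2).factorial = (m + 2) * (m + 1).factorial := Nat.factorial_succ _
    have h3 : 1 ≤ (m + 1).factorial := Nat.one_le_iff_ne_zero.mpr (Nat.factorial_ne_zero _)
    calc ∑ i ∈ Finset.Icc 1 m, i ^ 2 * i.factorial + (m + 1) ^ 2 * (m + 1).factorial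
        ≤ (m + 2) * (m + 1).factorial + (m + 1) ^ 2 * (m + 1).factorial := by
          rw [← h2]; exact Nat.add_le_add_right ih _
      _ ≤ (m + 3) * ((m + 2) * (m + 1).factorial) := by nlinarith
      _ = (m + 1 + 2).factorial := by rw [← h1]

lemma prod_one_le {n k : ℕ} {t : ℝ} (ht : 0 ≤ t) :
    1 ≤ ∏ r ∈ Finset.Icc k (n - 1), (1 + (r : ℝ) * t) := by
  calc (1 : ℝ) = ∏ _r ∈ Finset.Icc k (n - 1), (1 : ℝ) := (Finset.prod_const_one).symm
    _ ≤ ∏ r ∈ Finset.Icc k (n - 1), (1 + (r : ℝ) * t) := by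
        refine Finset.prod_le_prod (fun r _ => zero_le_one) (fun r _ => ?_)
        have : (0 : ℝ) ≤ (r : ℝ) * t := by positivity
        linarith

lemma prod_le_exp {n k : ℕ} {t c : ℝ} (hn : 1 ≤ n) (ht : 0 ≤ t)
    (htc : (n : ℝ) * ((n : ℝ) * t) ≤ c) :
    ∏ r ∈ Finset.Icc k (n - 1), (1 + (r : ℝ) * t) ≤ Real.exp c := by
  have h1 : ∏ r ∈ Finset.Icc k (n - 1), (1 + (r : ℝ) * t)
      ≤ ∏ r ∈ Finset.Icc k (n - 1), Real.exp ((r : ℝ) * t) := by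
    refine Finset.prod_le_prod (fun r _ => by positivity) (fun r _ => ?_)
    have := Real.add_one_le_exp ((r : ℝ) * t)
    linarith
  rw [← Real.exp_sum] at h1
  refine h1.trans (Real.exp_le_exp.mpr ?_)
  have hb : ∀ r ∈ Finset.Icc k (n - 1), (r : ℝ) * t ≤ (n : ℝ) * t := by
    intro r hr
    have hr' : r ≤ n := le_trans (Finset.mem_Icc.mp hr).2 (Nat.sub_le n 1)
    exact mul_le_mul_of_nonneg_right (by exact_mod_cast hr') ht
  have hcard : (Finset.Icc k (n - 1)).card ≤ n := by
    rw [Nat.card_Icc]; omega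
  calc ∑ r ∈ Finset.Icc k (n - 1), (r : ℝ) * t
      ≤ (Finset.Icc k (n - 1)).card • ((n : ℝ) * t) := Finset.sum_le_card_nsmul _ _ _ hb
    _ = ((Finset.Icc k (n - 1)).card : ℝ) * ((n : ℝ) * t) := by rw [nsmul_eq_mul]
    _ ≤ (n : ℝ) * ((n : ℝ) * t) := by
        have h0 : (0 : ℝ) ≤ (n : ℝ) * t := by positivity
        have hc' : ((Finset.Icc k (n - 1)).card : ℝ) ≤ (n : ℝ) := by exact_mod_cast hcard
        exact mul_le_mul_of_nonneg_right hc' h0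
    _ ≤ c := htc

lemma key_bounds (c s : ℝ) (hc : 0 < c) (hs : 2 ≤ s) {n : ℕ} (hn : 2 ≤ n) :
    (n : ℝ) ^ (s + 1) / (4 * c) ≤ Tsort n (c / (n : ℝ) ^ s) ∧
    Tsort n (c / (n : ℝ) ^ s) ≤ (2 * Real.exp c / c) * (n : ℝ) ^ (s + 1) := by
  set N : ℝ := (n : ℝ) with hNdef
  have hN2 : (2 : ℝ) ≤ N := by rw [hNdef]; exact_mod_cast hn
  have hN0 : (0 : ℝ) < N := by linarith
  have hN1 : (1 : ℝ) ≤ N := by linarith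
  have hNs : (0 : ℝ) < N ^ s := Real.rpow_pos_of_pos hN0 s
  set t : ℝ := c / N ^ s with htdef
  have ht : 0 < t := div_pos hc hNs
  have h2s : N ^ (2 : ℕ) ≤ N ^ s := by
    calc N ^ (2 : ℕ) = N ^ ((2 : ℕ) : ℝ) := (Real.rpow_natCast N 2).symm
      _ ≤ N ^ s := Real.rpow_le_rpow_of_exponent_le hN1 (by push_cast; linarith)
  have htc : N * (N * t) ≤ c := by
    have heq : N * (N * t) = c * (N ^ (2 : ℕ) / N ^ s) := by
      rw [htdef]; field_simp
    rw [heq]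
    calc c * (N ^ (2 : ℕ) / N ^ s) ≤ c * 1 :=
          mul_le_mul_of_nonneg_left ((div_le_one hNs).mpr h2s) hc.le
      _ = c := mul_one c
  set E : ℝ := Real.exp c with hEdef
  have hE : 0 < E := Real.exp_pos c
  have hF : (0 : ℝ) < (n.factorial : ℝ) := by exact_mod_cast n.factorial_pos
  set F : ℝ := (n.factorial : ℝ) with hFdef
  set P : ℕ → ℝ := fun k => ∏ r ∈ Finset.Icc k (n - 1), (1 + (r : ℝ) * t) with hPdef
  have hP1 : ∀ k, 1 ≤ P k := fun k => prod_one_le ht.le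
  have hPE : ∀ k, P k ≤ E := fun k => prod_le_exp (by omega) ht.le htc
  set inner : ℕ → ℝ := fun i =>
    P i + ∑ k ∈ Finset.Icc 1 (i - 1), ((k : ℝ) / ((k : ℝ) + 1)) * P k with hidef
  set S : ℝ := ∑ i ∈ Finset.Icc 1 (n - 1), (i : ℝ) * (i.factorial : ℝ) * inner i with hSdef
  have hT : Tsort n t = (1 / (t * F)) * S := rfl
  have hinner_nonneg : ∀ i, 0 ≤ inner i := by
    intro i
    have h1 : (0 : ℝ) ≤ P i := le_trans zero_le_one (hP1 i)
    have h2 : (0 : ℝ) ≤ ∑ k ∈ Finset.Icc 1 (i - 1), ((k : ℝ) / ((k : ℝ) + 1)) * P k := by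
      refine Finset.sum_nonneg fun k _ => ?_
      have := hP1 k
      positivity
    simp only [hidef]
    linarith
  -- upper bound on S
  have hinner_ub : ∀ i ∈ Finset.Icc 1 (n - 1), inner i ≤ (i : ℝ) * E := by
    intro i hi
    have hi1 : 1 ≤ i := (Finset.mem_Icc.mp hi).1
    have hsum : ∑ k ∈ Finset.Icc 1 (i - 1), ((k : ℝ) / ((k : ℝ) + 1)) * P k
        ≤ ∑ _k ∈ Finset.Icc 1 (i - 1), E := by
      refine Finset.sum_le_sum fun k _ => ?_
      have hk1 : (k : ℝ) / ((k : ℝ) + 1) ≤ 1 := by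
        rw [div_le_one (by positivity)]; linarith
      calc ((k : ℝ) / ((k : ℝ) + 1)) * P k ≤ 1 * P k :=
            mul_le_mul_of_nonneg_right hk1 (le_trans zero_le_one (hP1 k))
        _ = P k := one_mul _
        _ ≤ E := hPE k
    have hcard : ((Finset.Icc 1 (i - 1)).card : ℝ) = (i : ℝ) - 1 := by
      rw [Nat.card_Icc]
      have h' : i - 1 + 1 - 1 = i - 1 := by omega
      rw [h', Nat.cast_sub hi1, Nat.cast_one]
    rw [Finset.sum_const, nsmul_eq_mul, hcard] at hsum
    have hfin : inner i ≤ E + ((i : ℝ) - 1) * E := by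
      simp only [hidef]
      linarith [hPE i]
    have hi1' : (1 : ℝ) ≤ (i : ℝ) := by exact_mod_cast hi1
    nlinarith [hE.le]
  have hS_ub : S ≤ E * ((N + 1) * F) := by
    have h1 : S ≤ ∑ i ∈ Finset.Icc 1 (n - 1), (i : ℝ) * (i.factorial : ℝ) * ((i : ℝ) * E) := by
      rw [hSdef]
      refine Finset.sum_le_sum fun i hi => ?_
      exact mul_le_mul_of_nonneg_left (hinner_ub i hi) (by positivity)
    have h2 : ∑ i ∈ Finset.Icc 1 (n - 1), (i : ℝ) * (i.factorial : ℝ) * ((i : ℝ) * E)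
        = E * ∑ i ∈ Finset.Icc 1 (n - 1), ((i : ℝ) ^ 2 * (i.factorial : ℝ)) := by
      rw [Finset.mul_sum]
      exact Finset.sum_congr rfl fun i _ => by ring
    have h3 : ∑ i ∈ Finset.Icc 1 (n - 1), ((i : ℝ) ^ 2 * (i.factorial : ℝ))
        ≤ ((n + 1).factorial : ℝ) := by
      have hnat := sum_sq_factorial (n - 1)
      have hrw : n - 1 + 2 = n + 1 := by omega
      rw [hrw] at hnat
      calc ∑ i ∈ Finset.Icc 1 (n - 1), ((i : ℝ) ^ 2 * (i.factorial : ℝ))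
          = ((∑ i ∈ Finset.Icc 1 (n - 1), i ^ 2 * i.factorial : ℕ) : ℝ) := by push_cast; ring_nf
        _ ≤ ((n + 1).factorial : ℝ) := by exact_mod_cast hnat
    have h4 : ((n + 1).factorial : ℝ) = (N + 1) * F := by
      rw [Nat.factorial_succ, hFdef, hNdef]; push_cast; ring
    calc S ≤ E * ∑ i ∈ Finset.Icc 1 (n - 1), ((i : ℝ) ^ 2 * (i.factorial : ℝ)) := by
          rw [← h2]; exact h1
      _ ≤ E * ((n + 1).factorial : ℝ) := mul_le_mul_of_nonneg_left h3 hE.le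
      _ = E * ((N + 1) * F) := by rw [h4]
  -- lower bound on S
  have hmem : n - 1 ∈ Finset.Icc 1 (n - 1) := Finset.mem_Icc.mpr ⟨by omega, le_refl _⟩
  have hinner_lb : N / 2 ≤ inner (n - 1) := by
    have hsum : ∑ _k ∈ Finset.Icc 1 (n - 1 - 1), ((1 : ℝ) / 2)
        ≤ ∑ k ∈ Finset.Icc 1 (n - 1 - 1), ((k : ℝ) / ((k : ℝ) + 1)) * P k := by
      refine Finset.sum_le_sum fun k hk => ?_
      have hk1 : 1 ≤ k := (Finset.mem_Icc.mp hk).1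
      have hk1' : (1 : ℝ) ≤ (k : ℝ) := by exact_mod_cast hk1
      have hhalf : (1 : ℝ) / 2 ≤ (k : ℝ) / ((k : ℝ) + 1) := by
        rw [div_le_div_iff₀ (by norm_num) (by positivity)]; linarith
      calc (1 : ℝ) / 2 = (1 / 2) * 1 := by ring
        _ ≤ ((k : ℝ) / ((k : ℝ) + 1)) * P k :=
            mul_le_mul hhalf (hP1 k) zero_le_one (by positivity)
    have hcard : ((Finset.Icc 1 (n - 1 - 1)).card : ℝ) = N - 2 := by
      rw [Nat.card_Icc]
      have h' : n - 1 - 1 + 1 - 1 = n - 2 := by omega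
      rw [h', Nat.cast_sub hn, hNdef, Nat.cast_ofNat]
    rw [Finset.sum_const, nsmul_eq_mul, hcard] at hsum
    have heq : inner (n - 1) = P (n - 1) + ∑ k ∈ Finset.Icc 1 (n - 1 - 1),
        ((k : ℝ) / ((k : ℝ) + 1)) * P k := rfl
    rw [heq]
    have := hP1 (n - 1)
    linarith
  have hS_lb : (N - 1) * (F / N) * (N / 2) ≤ S := by
    have hsingle : (↑(n - 1) : ℝ) * (((n - 1).factorial : ℕ) : ℝ) * inner (n - 1) ≤ S := by
      rw [hSdef]
      exact Finset.single_le_sum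
        (f := fun i : ℕ => (i : ℝ) * (i.factorial : ℝ) * inner i)
        (fun i _ => by have := hinner_nonneg i; positivity) hmem
    have hc1 : ((n - 1 : ℕ) : ℝ) = N - 1 := by
      rw [Nat.cast_sub (by omega), hNdef, Nat.cast_one]
    have hc2 : (((n - 1).factorial : ℕ) : ℝ) = F / N := by
      have hmf : N * (((n - 1).factorial : ℕ) : ℝ) = F := by
        rw [hNdef, hFdef]
        exact_mod_cast Nat.mul_factorial_pred (show n ≠ 0 by omega)
      rw [← hmf, mul_comm, mul_div_assoc, div_self hN0.ne', mul_one]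
    have hstep : (N - 1) * (F / N) * (N / 2)
        ≤ (N - 1) * (F / N) * inner (n - 1) := by
      apply mul_le_mul_of_nonneg_left hinner_lb
      have h1' : (0 : ℝ) ≤ N - 1 := by linarith
      positivity
    rw [hc1, hc2] at hsingle
    linarith
  constructor
  · -- lower bound
    rw [hT]
    have h1 : (1 / (t * F)) * ((N - 1) * (F / N) * (N / 2)) ≤ (1 / (t * F)) * S :=
      mul_le_mul_of_nonneg_left hS_lb (by positivity)
    have h2 : (1 / (t * F)) * ((N - 1) * (F / N) * (N / 2)) = (N - 1) * N ^ s / (2 * c) := by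
      rw [htdef]; field_simp
    rw [h2] at h1
    have h3 : N ^ (s + 1) / (4 * c) ≤ (N - 1) * N ^ s / (2 * c) := by
      rw [Real.rpow_add_one hN0.ne' s, div_le_div_iff₀ (by positivity) (by positivity)]
      nlinarith [mul_nonneg (mul_nonneg hc.le hNs.le) (show (0:ℝ) ≤ N - 2 by linarith)]
    exact h3.trans h1
  · -- upper bound
    rw [hT]
    have h1 : (1 / (t * F)) * S ≤ (1 / (t * F)) * (E * ((N + 1) * F)) :=
      mul_le_mul_of_nonneg_left hS_ub (by positivity)
    have h2 : (1 / (t * F)) * (E * ((N + 1) * F)) = E * (N + 1) * N ^ s / c := by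
      rw [htdef]; field_simp
    rw [h2] at h1
    have h3 : E * (N + 1) * N ^ s / c ≤ (2 * E / c) * N ^ (s + 1) := by
      have hr : (2 * E / c) * N ^ (s + 1) = (E * (2 * N) * N ^ s) / c := by
        rw [Real.rpow_add_one hN0.ne' s]; ring
      rw [hr]
      have hnum : E * (N + 1) * N ^ s ≤ E * (2 * N) * N ^ s := by
        have h21 : N + 1 ≤ 2 * N := by linarith
        have := mul_le_mul_of_nonneg_right
          (mul_le_mul_of_nonneg_left h21 hE.le) hNs.le
        linarith
      gcongr
    exact h1.trans h3

theorem sorting_time_theta_poly (c s : ℝ) (hc : 0 < c) (hs : 2 ≤ s) :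
    (fun n : ℕ => Tsort n (c / (n : ℝ) ^ s)) =Θ[atTop] fun n : ℕ => (n : ℝ) ^ (s + 1) := by
  constructor
  · rw [isBigO_iff]
    refine ⟨2 * Real.exp c / c, ?_⟩
    filter_upwards [eventually_ge_atTop 2] with n hn
    obtain ⟨hlo, hhi⟩ := key_bounds c s hc hs hn
    have hN0 : (0 : ℝ) < (n : ℝ) := by
      have : (0:ℕ) < n := by omega
      exact_mod_cast this
    have hpos : (0 : ℝ) < (n : ℝ) ^ (s + 1) := Real.rpow_pos_of_pos hN0 _
    have hT0 : 0 ≤ Tsort n (c / (n : ℝ) ^ s) := by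
      have h' : (0 : ℝ) < (n : ℝ) ^ (s + 1) / (4 * c) := by positivity
      linarith
    rw [Real.norm_eq_abs, Real.norm_eq_abs, abs_of_nonneg hT0, abs_of_pos hpos]
    exact hhi
  · rw [isBigO_iff]
    refine ⟨4 * c, ?_⟩
    filter_upwards [eventually_ge_atTop 2] with n hn
    obtain ⟨hlo, hhi⟩ := key_bounds c s hc hs hn
    have hN0 : (0 : ℝ) < (n : ℝ) := by
      have : (0:ℕ) < n := by omega
      exact_mod_cast this
    have hpos : (0 : ℝ) < (n : ℝ) ^ (s + 1) := Real.rpow_pos_of_pos hN0 _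
    have hT0 : 0 ≤ Tsort n (c / (n : ℝ) ^ s) := by
      have h' : (0 : ℝ) < (n : ℝ) ^ (s + 1) / (4 * c) := by positivity
      linarith
    rw [Real.norm_eq_abs, Real.norm_eq_abs, abs_of_pos hpos, abs_of_nonneg hT0]
    rw [div_le_iff₀ (by positivity)] at hlo
    linarith
end
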